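/- For any single agent with a monotonic valuation u over subsets of a finite set M, there exists a partition (A, B) of M such that both A and B are EFX for u, i.e., for every j ∈ B, u(A) ≥ u(B \ {j}), and for every j ∈ A, u(B) ≥ u(A \ {j}). -/

import Mathlib

open Finset

/-- Bundle `A` is EF1 for valuation `u` (items `M`). -/
def EF1 {α : Type*} [DecidableEq α] (M : Finset α) (u : Finset α → ℝ) (A : Finset α) : Prop :=
  u (M \ A) ≤ u A ∨ ∃ j ∈ M \ A, u ((M \ A).erase j) ≤ u A

/-- Bundle `A` is EFX for valuation `u` (items `M`). -/
def EFX {α : Type*} [DecidableEq α] (M : Finset α) (u : Finset α → ℝ) (A : Finset α) : Prop :=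
  ∀ j ∈ M \ A, u ((M \ A).erase j) ≤ u A

/-- For any monotonic valuation `u`, there is a partition `(A, M \ A)` of the items
both of whose parts are EFX for `u`. -/
theorem exists_EFX_partition {α : Type*} [DecidableEq α] (M : Finset α)
    (u : Finset α → ℝ) (hu0 : u ∅ = 0)
    (hum : ∀ A B : Finset α, A ⊆ B → u A ≤ u B) :
    ∃ A ⊆ M, EFX M u A ∧ EFX M u (M \ A) := by
  classical
  set S : Finset (Finset α) := M.powerset.filter (fun A => u (M \ A) ≤ u A) with hS
  have hMS : M ∈ S := by
    simp only [hS, Finset.mem_filter, Finset.mem_powerset, Finset.sdiff_self]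
    exact ⟨le_rfl, hu0 ▸ hum ∅ M (Finset.empty_subset M)⟩
  obtain ⟨A, hAS, hmax⟩ := S.exists_max_image
    (fun A => toLex (u (M \ A), (M \ A).card)) ⟨M, hMS⟩
  simp only [hS, Finset.mem_filter, Finset.mem_powerset] at hAS
  obtain ⟨hAM, h1⟩ := hAS
  refine ⟨A, hAM, ?_, ?_⟩
  · intro j hj
    exact le_trans (hum _ _ (Finset.erase_subset _ _)) h1
  · unfold EFX
    rw [Finset.sdiff_sdiff_eq_self hAM]
    intro j hj
    by_contra hlt
    push_neg at hlt
    have hjA : j ∈ A := hj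
    have hjM : j ∈ M := hAM hjA
    have hcomp : M \ (A.erase j) = insert j (M \ A) := Finset.sdiff_erase hjM
    have hjnot : j ∉ M \ A := by simp [hjA]
    have hcard : (insert j (M \ A)).card = (M \ A).card + 1 :=
      Finset.card_insert_of_notMem hjnot
    by_cases hc : u (insert j (M \ A)) ≤ u (A.erase j)
    · have hA'S : A.erase j ∈ S := by
        simp only [hS, Finset.mem_filter, Finset.mem_powerset]
        exact ⟨(Finset.erase_subset _ _).trans hAM, hcomp ▸ hc⟩
      have h := hmax _ hA'S
      simp only [hcomp] at h
      rcases Prod.Lex.le_iff.mp h with h' | ⟨h', h''⟩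
      · exact absurd h' (not_lt.mpr (hum _ _ (Finset.subset_insert _ _)))
      · simp only [ofLex_toLex] at h''; rw [hcard] at h''; omega
    · push_neg at hc
      have hBM : insert j (M \ A) ⊆ M :=
        Finset.insert_subset hjM (Finset.sdiff_subset)
      have hMB : M \ insert j (M \ A) = A.erase j := by
        rw [Finset.sdiff_insert, Finset.sdiff_sdiff_eq_self hAM]
      have hBS : insert j (M \ A) ∈ S := by
        simp only [hS, Finset.mem_filter, Finset.mem_powerset]
        exact ⟨hBM, hMB ▸ hc.le⟩
      have h := hmax _ hBS
      simp only [hMB] at h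
      rcases Prod.Lex.le_iff.mp h with h' | ⟨h', _⟩
      · exact absurd h' (not_lt.mpr hlt.le)
      · simp only [ofLex_toLex] at h'; rw [h'] at hlt; exact lt_irrefl _ hlt
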